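/- Let W ⊆ ℝ^d be a nonempty convex set with diameter at most D (D > 0), let n ≥ 1, let f₁, …, fₙ : ℝ^d → ℝ be convex differentiable functions with ‖∇f_i(w)‖ ≤ L₀ for all w ∈ W and all i, set F = (1/n)∑_{i=1}^n f_i, and let w* be a global minimizer of F over W. Fix L₁ > 0, t ≥ 0, w₀ ∈ W, and step sizes η_k = D/(L₁√(k+1)). For each index sequence σ ∈ {1,…,n}^t define SGD iterates w₀^σ = w₀ and, for 0 ≤ k < t, let w_{k+1}^σ ∈ W satisfy ⟨w_k^σ − η_k ∇f_{σ_k}(w_k^σ) − w_{k+1}^σ, u − w_{k+1}^σ⟩ ≤ 0 for all u ∈ W, where w_{k+1}^σ depends only on σ₀, …, σ_k. Then the average of the running average over all n^t index sequences satisfies (1/n^t) ∑_σ (1/(t+1)) ∑_{k=0}^{t} F(w_k^σ) − F(w*) ≤ D(L₁² + 2L₀²) / (2L₁√(t+1)). -/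

import Mathlib

open scoped RealInnerProductSpace

/-- Subgradient inequality for a convex differentiable function. -/
lemma sgd_aux_subgrad {E : Type*} [NormedAddCommGroup E] [InnerProductSpace ℝ E]
    [CompleteSpace E] {f : E → ℝ} {g x : E} (y : E)
    (hc : ConvexOn ℝ Set.univ f) (hg : HasGradientAt f g x) :
    f x + ⟪g, y - x⟫ ≤ f y := by
  set φ : ℝ → ℝ := fun s => f (x + s • (y - x)) with hφ
  have hconv : ConvexOn ℝ Set.univ φ := by
    have := hc.comp_affineMap (AffineMap.lineMap x y : ℝ →ᵃ[ℝ] E)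
    simp only [Set.preimage_univ] at this
    have heq : φ = f ∘ ⇑(AffineMap.lineMap x y : ℝ →ᵃ[ℝ] E) := by
      funext s
      simp [hφ, AffineMap.lineMap_apply, add_comm]
    rw [heq]; exact this
  have hcurve : HasDerivAt (fun s : ℝ => x + s • (y - x)) (y - x) 0 := by
    simpa using ((hasDerivAt_id (0:ℝ)).smul_const (y - x)).const_add x
  have hfd : HasFDerivAt f ((InnerProductSpace.toDual ℝ E) g : E →L[ℝ] ℝ) x := hg
  have hfd' : HasFDerivAt f ((InnerProductSpace.toDual ℝ E) g : E →L[ℝ] ℝ)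
      (x + (0:ℝ) • (y - x)) := by simpa using hfd
  have hd : HasDerivAt φ ⟪g, y - x⟫ 0 := by
    have := hfd'.comp_hasDerivAt (0:ℝ) hcurve
    simpa [hφ, InnerProductSpace.toDual_apply_apply, Function.comp_def] using this
  have hslope := hconv.le_slope_of_hasDerivAt (Set.mem_univ (0:ℝ)) (Set.mem_univ (1:ℝ))
    zero_lt_one hd
  have h0 : φ 0 = f x := by simp [hφ]
  have h1 : φ 1 = f y := by simp [hφ]
  rw [slope_def_field] at hslope
  simp [h0, h1] at hslope
  linarith

/-- Double counting: summing `h σ (σ j)` over all index sequences, when `h` does not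
depend on coordinate `j`. -/
lemma sgd_aux_count {n t : ℕ} (j : Fin t) (h : (Fin t → Fin n) → Fin n → ℝ)
    (hinv : ∀ (σ : Fin t → Fin n) (a i : Fin n), h (Function.update σ j a) i = h σ i) :
    ∑ σ : Fin t → Fin n, ∑ i : Fin n, h σ i
      = (n : ℝ) * ∑ σ : Fin t → Fin n, h σ (σ j) := by
  classical
  set e := (Equiv.funSplitAt j (Fin n)).symm with he
  have h1 : ∀ (p : Fin n × ({ j' // j' ≠ j } → Fin n)), e p j = p.1 := by
    intro p; simp [he, Equiv.funSplitAt, Equiv.piSplitAt]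
  have h2 : ∀ (a b : Fin n) (r : { j' // j' ≠ j } → Fin n) (i : Fin n),
      h (e (a, r)) i = h (e (b, r)) i := by
    intro a b r i
    have hupd : e (a, r) = Function.update (e (b, r)) j a := by
      funext x
      rcases eq_or_ne x j with hx | hx
      · subst hx; simp [Function.update, h1]
      · simp [Function.update, hx, he, Equiv.funSplitAt, Equiv.piSplitAt]
    rw [hupd, hinv]
  calc ∑ σ : Fin t → Fin n, ∑ i : Fin n, h σ i
      = ∑ p : Fin n × ({ j' // j' ≠ j } → Fin n), ∑ i, h (e p) i :=
        (Equiv.sum_comp e (fun σ => ∑ i, h σ i)).symm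
    _ = ∑ a : Fin n, ∑ r : { j' // j' ≠ j } → Fin n, ∑ i, h (e (i, r)) i := by
        rw [Fintype.sum_prod_type]
        exact Finset.sum_congr rfl fun a _ => Finset.sum_congr rfl fun r _ =>
          Finset.sum_congr rfl fun i _ => h2 a i r i
    _ = (n : ℝ) * ∑ r : { j' // j' ≠ j } → Fin n, ∑ i, h (e (i, r)) i := by
        rw [Finset.sum_const, Finset.card_univ, Fintype.card_fin, nsmul_eq_mul]
    _ = (n : ℝ) * ∑ σ : Fin t → Fin n, h σ (σ j) := by
        congr 1
        rw [← Equiv.sum_comp e (fun σ => h σ (σ j)), Fintype.sum_prod_type, Finset.sum_comm]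
        exact Finset.sum_congr rfl fun r _ => Finset.sum_congr rfl fun i _ => by rw [h1]

lemma sgd_aux_telescope (Dsq : ℝ) (a b : ℕ → ℝ) (haD : ∀ k, a k ≤ Dsq)
    (ha0 : ∀ k, 0 ≤ a k) (hb0 : 0 ≤ b 0) (hbmono : Monotone b) :
    ∀ m, (∑ k ∈ Finset.range m, (a k - a (k + 1)) * b k) + a m * b m ≤ Dsq * b m := by
  intro m
  induction m with
  | zero => simpa using mul_le_mul_of_nonneg_right (haD 0) hb0
  | succ m ih =>
    rw [Finset.sum_range_succ]
    have h1 : b m ≤ b (m + 1) := hbmono (Nat.le_succ m)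
    nlinarith [haD (m + 1), ha0 (m + 1), ih]

lemma sgd_aux_invsqrt : ∀ m : ℕ, ∑ k ∈ Finset.range m, (Real.sqrt (k + 1))⁻¹
    ≤ 2 * Real.sqrt m := by
  intro m
  induction m with
  | zero => simp
  | succ m ih =>
    rw [Finset.sum_range_succ]
    have hs : 0 < Real.sqrt (m + 1) := Real.sqrt_pos.2 (by positivity)
    have hr : 0 ≤ Real.sqrt m := Real.sqrt_nonneg _
    have hs2 : Real.sqrt (m + 1) ^ 2 = (m : ℝ) + 1 := Real.sq_sqrt (by positivity)
    have hr2 : Real.sqrt m ^ 2 = (m : ℝ) := Real.sq_sqrt (by positivity)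
    have key : (Real.sqrt (m + 1))⁻¹ ≤ 2 * (Real.sqrt (m + 1) - Real.sqrt m) := by
      rw [inv_le_iff_one_le_mul₀' hs]
      nlinarith [sq_nonneg (Real.sqrt (m + 1) - Real.sqrt m)]
    have hcast : ((m : ℝ) + 1) = ((m + 1 : ℕ) : ℝ) := by push_cast; ring
    rw [← hcast] at *
    linarith

set_option maxHeartbeats 1600000 in
/-- `O(1/√t)` convergence rate of the running average of projected SGD iterates (in
expectation over the uniformly random index sequences) for an average `F` of convex
functions with gradients bounded by `L₀` on a convex set of diameter at most `D`,
with step sizes `η_k = D / (L₁ √(k+1))`. -/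
theorem sgd_running_average_rate
    {d : ℕ} {n : ℕ} (hn : 1 ≤ n)
    (W : Set (EuclideanSpace ℝ (Fin d))) (hW : Convex ℝ W) (hWne : W.Nonempty)
    (D : ℝ) (hD : 0 < D) (hdiam : ∀ w ∈ W, ∀ v ∈ W, ‖w - v‖ ≤ D)
    (f : Fin n → EuclideanSpace ℝ (Fin d) → ℝ)
    (g : Fin n → EuclideanSpace ℝ (Fin d) → EuclideanSpace ℝ (Fin d))
    (hconv : ∀ i, ConvexOn ℝ Set.univ (f i))
    (hgrad : ∀ i x, HasGradientAt (f i) (g i x) x)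
    (L₀ : ℝ) (hL₀ : ∀ i, ∀ x ∈ W, ‖g i x‖ ≤ L₀)
    (F : EuclideanSpace ℝ (Fin d) → ℝ)
    (hF : F = fun w => (n : ℝ)⁻¹ * ∑ i : Fin n, f i w)
    (wstar : EuclideanSpace ℝ (Fin d)) (hws : wstar ∈ W)
    (hmin : ∀ w ∈ W, F wstar ≤ F w)
    (L₁ : ℝ) (hL₁ : 0 < L₁) (t : ℕ)
    (w₀ : EuclideanSpace ℝ (Fin d)) (hw₀ : w₀ ∈ W)
    (η : ℕ → ℝ) (hη : ∀ k : ℕ, η k = D / (L₁ * Real.sqrt (k + 1)))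
    (w : (Fin t → Fin n) → ℕ → EuclideanSpace ℝ (Fin d))
    (hw0 : ∀ σ, w σ 0 = w₀)
    (hmem : ∀ σ k, k < t → w σ (k + 1) ∈ W)
    (hproj : ∀ (σ : Fin t → Fin n) (k : ℕ) (hk : k < t), ∀ u ∈ W,
      ⟪w σ k - η k • g (σ ⟨k, hk⟩) (w σ k) - w σ (k + 1), u - w σ (k + 1)⟫ ≤ 0)
    (hdep : ∀ (σ σ' : Fin t → Fin n) (k : ℕ), k < t →
      (∀ j : Fin t, (j : ℕ) ≤ k → σ j = σ' j) → w σ (k + 1) = w σ' (k + 1)) :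
    ((n : ℝ) ^ t)⁻¹ *
        (∑ σ : Fin t → Fin n, ((t : ℝ) + 1)⁻¹ * ∑ k ∈ Finset.range (t + 1), F (w σ k)) -
        F wstar ≤
      D * (L₁ ^ 2 + 2 * L₀ ^ 2) / (2 * L₁ * Real.sqrt (t + 1)) := by
  classical
  have hn' : (0:ℝ) < n := by exact_mod_cast hn
  have hn0 : ((n : ℝ)) ≠ 0 := ne_of_gt hn'
  have hL₀0 : 0 ≤ L₀ := le_trans (norm_nonneg _) (hL₀ ⟨0, hn⟩ wstar hws)
  have hmemk : ∀ σ k, k ≤ t → w σ k ∈ W := by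
    intro σ k hk
    cases k with
    | zero => rw [hw0]; exact hw₀
    | succ m => exact hmem σ m (by omega)
  set a : (Fin t → Fin n) → ℕ → ℝ := fun σ k => ‖w σ k - wstar‖ ^ 2 with ha
  set b : ℕ → ℝ := fun k => L₁ * Real.sqrt (k + 1) / (2 * D) with hb
  have hη_pos : ∀ k, 0 < η k := by
    intro k; rw [hη]
    have : (0:ℝ) < Real.sqrt (k + 1) := Real.sqrt_pos.2 (by positivity)
    positivity
  have hb_eq : ∀ k, b k = (2 * η k)⁻¹ := by
    intro k
    have hsk : (0:ℝ) < Real.sqrt (k + 1) := Real.sqrt_pos.2 (by positivity)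
    rw [hb, hη]
    field_simp
  have haD : ∀ σ k, k ≤ t → a σ k ≤ D ^ 2 := by
    intro σ k hk
    have h1 : ‖w σ k - wstar‖ ≤ D := hdiam _ (hmemk σ k hk) _ hws
    have h2 : (0:ℝ) ≤ ‖w σ k - wstar‖ := norm_nonneg _
    show ‖w σ k - wstar‖ ^ 2 ≤ D ^ 2
    nlinarith
  have ha0 : ∀ σ k, 0 ≤ a σ k := fun σ k => by rw [ha]; positivity
  -- the per-step basic bound, in divided form
  have hdivform : ∀ (X Y Z : ℝ) (k : ℕ), 2 * η k * X ≤ Y - Z + η k ^ 2 * L₀ ^ 2 →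
      X ≤ (Y - Z) * b k + η k * L₀ ^ 2 / 2 := by
    intro X Y Z k hXY
    have hηk := hη_pos k
    rw [hb_eq]
    have h2η : (0:ℝ) < 2 * η k := by linarith
    have h7 : (Y - Z) * (2 * η k)⁻¹ + η k * L₀ ^ 2 / 2
        = ((Y - Z) + η k ^ 2 * L₀ ^ 2) / (2 * η k) := by
      field_simp
    rw [h7, le_div_iff₀ h2η]
    nlinarith
  -- per-step inequality
  have hstep : ∀ (σ : Fin t → Fin n) (k : ℕ) (hk : k < t),
      f (σ ⟨k, hk⟩) (w σ k) - f (σ ⟨k, hk⟩) wstar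
        ≤ (a σ k - a σ (k + 1)) * b k + η k * L₀ ^ 2 / 2 := by
    intro σ k hk
    set i := σ ⟨k, hk⟩ with hi
    set x := w σ k with hx
    set p := w σ (k + 1) with hp
    set gk := g i x with hgk
    have hxW : x ∈ W := hmemk σ k hk.le
    have hsub : f i x - f i wstar ≤ ⟪gk, x - wstar⟫ := by
      have h1 := sgd_aux_subgrad wstar (hconv i) (hgrad i x)
      have h2 : ⟪gk, wstar - x⟫ = -⟪gk, x - wstar⟫ := by
        rw [← inner_neg_right]; congr 1; abel
      rw [h2] at h1
      linarith
    have hproj' := hproj σ k hk wstar hws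
    have hkey : ‖p - wstar‖ ^ 2 ≤ ‖x - η k • gk - wstar‖ ^ 2 := by
      have hexp : x - η k • gk - wstar = (x - η k • gk - p) + (p - wstar) := by abel
      rw [hexp, norm_add_sq_real]
      have h2 : (0:ℝ) ≤ ⟪x - η k • gk - p, p - wstar⟫ := by
        have heq : ⟪x - η k • gk - p, p - wstar⟫ = -⟪x - η k • gk - p, wstar - p⟫ := by
          rw [← inner_neg_right]; congr 1; abel
        rw [heq]
        linarith [hproj']
      nlinarith [sq_nonneg ‖x - η k • gk - p‖]
    have hexp2 : ‖x - η k • gk - wstar‖ ^ 2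
        = ‖x - wstar‖ ^ 2 - 2 * η k * ⟪gk, x - wstar⟫ + η k ^ 2 * ‖gk‖ ^ 2 := by
      have h3 : x - η k • gk - wstar = (x - wstar) - η k • gk := by abel
      rw [h3, norm_sub_sq_real, real_inner_smul_right, real_inner_comm, norm_smul, Real.norm_eq_abs]
      rw [mul_pow, sq_abs]
      ring
    have hgb : ‖gk‖ ≤ L₀ := hL₀ i x hxW
    have hg0 : (0:ℝ) ≤ ‖gk‖ := norm_nonneg _
    refine hdivform _ _ _ k ?_
    have h5 : ‖gk‖ ^ 2 ≤ L₀ ^ 2 := by nlinarith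
    have hηk := hη_pos k
    have hak : a σ k = ‖x - wstar‖ ^ 2 := rfl
    have hak1 : a σ (k + 1) = ‖p - wstar‖ ^ 2 := rfl
    rw [hak, hak1]
    linarith [mul_le_mul_of_nonneg_left hsub (by linarith : (0:ℝ) ≤ 2 * η k),
      mul_le_mul_of_nonneg_left h5 (sq_nonneg (η k)), hkey, hexp2]
  -- last-iterate inequality
  have hlast : ∀ (σ : Fin t → Fin n) (i : Fin n),
      f i (w σ t) - f i wstar ≤ a σ t * b t + η t * L₀ ^ 2 / 2 := by
    intro σ i
    set x := w σ t with hx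
    have hxW : x ∈ W := hmemk σ t le_rfl
    have hsub : f i x - f i wstar ≤ ⟪g i x, x - wstar⟫ := by
      have h1 := sgd_aux_subgrad wstar (hconv i) (hgrad i x)
      have h2 : ⟪g i x, wstar - x⟫ = -⟪g i x, x - wstar⟫ := by
        rw [← inner_neg_right]; congr 1; abel
      rw [h2] at h1
      linarith
    have hcs : ⟪g i x, x - wstar⟫ ≤ ‖g i x‖ * ‖x - wstar‖ := real_inner_le_norm _ _
    have hgb : ‖g i x‖ ≤ L₀ := hL₀ i x hxW
    have hg0 : (0:ℝ) ≤ ‖g i x‖ := norm_nonneg _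
    have hnx : (0:ℝ) ≤ ‖x - wstar‖ := norm_nonneg _
    have hηt := hη_pos t
    have h6 : f i x - f i wstar ≤ (a σ t - 0) * b t + η t * L₀ ^ 2 / 2 := by
      refine hdivform _ _ _ t ?_
      have hat : a σ t = ‖x - wstar‖ ^ 2 := rfl
      rw [hat]
      have hA : f i x - f i wstar ≤ L₀ * ‖x - wstar‖ := by
        have := mul_le_mul_of_nonneg_right hgb hnx
        linarith
      have hB : 2 * η t * (L₀ * ‖x - wstar‖) ≤ ‖x - wstar‖ ^ 2 + η t ^ 2 * L₀ ^ 2 := by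
        nlinarith [sq_nonneg (‖x - wstar‖ - η t * L₀)]
      have hC := mul_le_mul_of_nonneg_left hA (by linarith : (0:ℝ) ≤ 2 * η t)
      linarith
    simpa using h6
  -- expectation over index sequences
  set P : (Fin t → Fin n) → ℕ → ℝ := fun σ k => F (w σ k) - F wstar with hP
  have hPform : ∀ σ k, P σ k = (n:ℝ)⁻¹ * ∑ i : Fin n, (f i (w σ k) - f i wstar) := by
    intro σ k
    rw [hP]
    simp only [hF]
    rw [Finset.sum_sub_distrib]
    ring
  have hTk : ∀ (k : ℕ) (hk : k < t),
      ∑ σ : Fin t → Fin n, P σ k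
        = ∑ σ : Fin t → Fin n, (f (σ ⟨k, hk⟩) (w σ k) - f (σ ⟨k, hk⟩) wstar) := by
    intro k hk
    have hinv : ∀ (σ : Fin t → Fin n) (c i : Fin n),
        f i (w (Function.update σ ⟨k, hk⟩ c) k) - f i wstar
          = f i (w σ k) - f i wstar := by
      intro σ c i
      have hwk : w (Function.update σ ⟨k, hk⟩ c) k = w σ k := by
        cases k with
        | zero => rw [hw0, hw0]
        | succ m =>
          refine hdep _ _ m (by omega) ?_
          intro j hj
          have hne : j ≠ (⟨m + 1, hk⟩ : Fin t) := by
            intro hje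
            rw [hje] at hj
            simp at hj
          exact Function.update_of_ne hne c σ
      rw [hwk]
    have hcount := sgd_aux_count ⟨k, hk⟩ (fun σ i => f i (w σ k) - f i wstar) hinv
    calc ∑ σ : Fin t → Fin n, P σ k
        = (n:ℝ)⁻¹ * ∑ σ : Fin t → Fin n, ∑ i : Fin n, (f i (w σ k) - f i wstar) := by
          rw [Finset.mul_sum]
          exact Finset.sum_congr rfl fun σ _ => hPform σ k
      _ = (n:ℝ)⁻¹ * ((n:ℝ) * ∑ σ : Fin t → Fin n,
            (f (σ ⟨k, hk⟩) (w σ k) - f (σ ⟨k, hk⟩) wstar)) := by rw [hcount]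
      _ = ∑ σ : Fin t → Fin n, (f (σ ⟨k, hk⟩) (w σ k) - f (σ ⟨k, hk⟩) wstar) := by
          rw [← mul_assoc, inv_mul_cancel₀ hn0, one_mul]
  -- combining bounds for each k
  have hTk_le : ∀ k ∈ Finset.range t, ∑ σ : Fin t → Fin n, P σ k
      ≤ ∑ σ : Fin t → Fin n, ((a σ k - a σ (k + 1)) * b k + η k * L₀ ^ 2 / 2) := by
    intro k hkmem
    have hk : k < t := Finset.mem_range.1 hkmem
    rw [hTk k hk]
    exact Finset.sum_le_sum fun σ _ => hstep σ k hk
  have hTt_le : ∑ σ : Fin t → Fin n, P σ t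
      ≤ ∑ σ : Fin t → Fin n, (a σ t * b t + η t * L₀ ^ 2 / 2) := by
    refine Finset.sum_le_sum fun σ _ => ?_
    rw [hPform σ t]
    have h1 : ∑ i : Fin n, (f i (w σ t) - f i wstar)
        ≤ ∑ i : Fin n, (a σ t * b t + η t * L₀ ^ 2 / 2) :=
      Finset.sum_le_sum fun i _ => hlast σ i
    have h2 : ∑ i : Fin n, (a σ t * b t + η t * L₀ ^ 2 / 2)
        = (n:ℝ) * (a σ t * b t + η t * L₀ ^ 2 / 2) := by
      rw [Finset.sum_const, Finset.card_univ, Fintype.card_fin, nsmul_eq_mul]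
    calc (n:ℝ)⁻¹ * ∑ i : Fin n, (f i (w σ t) - f i wstar)
        ≤ (n:ℝ)⁻¹ * ((n:ℝ) * (a σ t * b t + η t * L₀ ^ 2 / 2)) := by
          rw [← h2]
          exact mul_le_mul_of_nonneg_left h1 (by positivity)
      _ = a σ t * b t + η t * L₀ ^ 2 / 2 := by
          rw [← mul_assoc, inv_mul_cancel₀ hn0, one_mul]
  -- deterministic per-σ bound
  have hS : ∀ σ : Fin t → Fin n,
      (∑ k ∈ Finset.range t, ((a σ k - a σ (k + 1)) * b k + η k * L₀ ^ 2 / 2))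
        + (a σ t * b t + η t * L₀ ^ 2 / 2)
      ≤ D * Real.sqrt (t + 1) * (L₁ ^ 2 + 2 * L₀ ^ 2) / (2 * L₁) := by
    intro σ
    have hbmono : Monotone b := by
      intro k l hkl
      rw [hb]
      have h1 : Real.sqrt (k + 1) ≤ Real.sqrt (l + 1) := by
        apply Real.sqrt_le_sqrt
        have : (k:ℝ) ≤ l := by exact_mod_cast hkl
        linarith
      apply div_le_div_of_nonneg_right ?_ (by positivity)
      · exact mul_le_mul_of_nonneg_left h1 hL₁.le
    have hb0 : 0 ≤ b 0 := by rw [hb]; positivity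
    set a' : ℕ → ℝ := fun k => a σ (min k t) with ha'
    have haD' : ∀ k, a' k ≤ D ^ 2 := fun k => haD σ (min k t) (min_le_right _ _)
    have ha0' : ∀ k, 0 ≤ a' k := fun k => ha0 σ _
    have htel := sgd_aux_telescope (D ^ 2) a' b haD' ha0' hb0 hbmono t
    have hsame : ∑ k ∈ Finset.range t, (a' k - a' (k + 1)) * b k
        = ∑ k ∈ Finset.range t, (a σ k - a σ (k + 1)) * b k := by
      refine Finset.sum_congr rfl fun k hk => ?_
      have hk' : k < t := Finset.mem_range.1 hk
      rw [ha']
      simp only []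
      rw [min_eq_left hk'.le, min_eq_left (by omega : k + 1 ≤ t)]
    have ha't : a' t = a σ t := by rw [ha']; simp
    rw [hsame, ha't] at htel
    -- bound for the step sizes sum
    have hηsum : ∑ k ∈ Finset.range (t + 1), η k * L₀ ^ 2 / 2
        ≤ L₀ ^ 2 * D / L₁ * Real.sqrt (t + 1) := by
      have h1 : ∑ k ∈ Finset.range (t + 1), η k * L₀ ^ 2 / 2
          = (L₀ ^ 2 / 2) * (D / L₁) * ∑ k ∈ Finset.range (t + 1), (Real.sqrt (k + 1))⁻¹ := by
        rw [Finset.mul_sum]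
        refine Finset.sum_congr rfl fun k _ => ?_
        rw [hη k]
        have hsk : (0:ℝ) < Real.sqrt (k + 1) := Real.sqrt_pos.2 (by positivity)
        field_simp
      rw [h1]
      have h2 := sgd_aux_invsqrt (t + 1)
      have h3 : ((t + 1 : ℕ) : ℝ) = (t : ℝ) + 1 := by push_cast; ring
      rw [h3] at h2
      have h4 : (0:ℝ) ≤ L₀ ^ 2 / 2 * (D / L₁) := by positivity
      calc (L₀ ^ 2 / 2) * (D / L₁) * ∑ k ∈ Finset.range (t + 1), (Real.sqrt (k + 1))⁻¹
          ≤ (L₀ ^ 2 / 2) * (D / L₁) * (2 * Real.sqrt ((t:ℝ) + 1)) :=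
            mul_le_mul_of_nonneg_left h2 h4
        _ = L₀ ^ 2 * D / L₁ * Real.sqrt ((t:ℝ) + 1) := by ring
    -- put together
    have hbt : D ^ 2 * b t = D * L₁ * Real.sqrt (t + 1) / 2 := by
      rw [hb]
      field_simp
    have hsplit : (∑ k ∈ Finset.range t, ((a σ k - a σ (k + 1)) * b k + η k * L₀ ^ 2 / 2))
        + (a σ t * b t + η t * L₀ ^ 2 / 2)
        = ((∑ k ∈ Finset.range t, (a σ k - a σ (k + 1)) * b k) + a σ t * b t)
          + ∑ k ∈ Finset.range (t + 1), η k * L₀ ^ 2 / 2 := by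
      rw [Finset.sum_add_distrib, Finset.sum_range_succ]
      ring
    rw [hsplit]
    have hfinal : D * L₁ * Real.sqrt (t + 1) / 2 + L₀ ^ 2 * D / L₁ * Real.sqrt (t + 1)
        = D * Real.sqrt (t + 1) * (L₁ ^ 2 + 2 * L₀ ^ 2) / (2 * L₁) := by
      field_simp
    rw [← hfinal]
    have := hbt ▸ htel
    linarith
  -- sum over all k
  set R : ℝ := D * Real.sqrt (t + 1) * (L₁ ^ 2 + 2 * L₀ ^ 2) / (2 * L₁) with hR
  have hsumP : ∑ k ∈ Finset.range (t + 1), ∑ σ : Fin t → Fin n, P σ k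
      ≤ (n:ℝ) ^ t * R := by
    rw [Finset.sum_range_succ]
    have h1 : ∑ k ∈ Finset.range t, ∑ σ : Fin t → Fin n, P σ k
        ≤ ∑ k ∈ Finset.range t, ∑ σ : Fin t → Fin n,
            ((a σ k - a σ (k + 1)) * b k + η k * L₀ ^ 2 / 2) :=
      Finset.sum_le_sum hTk_le
    have h2 : ∑ k ∈ Finset.range t, ∑ σ : Fin t → Fin n,
          ((a σ k - a σ (k + 1)) * b k + η k * L₀ ^ 2 / 2)
        + ∑ σ : Fin t → Fin n, (a σ t * b t + η t * L₀ ^ 2 / 2)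
        = ∑ σ : Fin t → Fin n,
            ((∑ k ∈ Finset.range t, ((a σ k - a σ (k + 1)) * b k + η k * L₀ ^ 2 / 2))
              + (a σ t * b t + η t * L₀ ^ 2 / 2)) := by
      rw [Finset.sum_comm, ← Finset.sum_add_distrib]
    have h3 : ∑ σ : Fin t → Fin n,
          ((∑ k ∈ Finset.range t, ((a σ k - a σ (k + 1)) * b k + η k * L₀ ^ 2 / 2))
            + (a σ t * b t + η t * L₀ ^ 2 / 2))
        ≤ ∑ σ : Fin t → Fin n, R := Finset.sum_le_sum fun σ _ => hS σ
    have h4 : ∑ σ : Fin t → Fin n, R = (n:ℝ) ^ t * R := by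
      rw [Finset.sum_const, Finset.card_univ, Fintype.card_fun, Fintype.card_fin,
        Fintype.card_fin, nsmul_eq_mul]
      push_cast
      ring
    linarith [hTt_le]
  -- final algebra
  have ht1 : (0:ℝ) < (t:ℝ) + 1 := by positivity
  have hnt : (0:ℝ) < (n:ℝ) ^ t := by positivity
  have hLHS : ((n : ℝ) ^ t)⁻¹ *
        (∑ σ : Fin t → Fin n, ((t : ℝ) + 1)⁻¹ * ∑ k ∈ Finset.range (t + 1), F (w σ k)) -
        F wstar
      = ((n:ℝ) ^ t)⁻¹ * ((t:ℝ) + 1)⁻¹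
          * ∑ k ∈ Finset.range (t + 1), ∑ σ : Fin t → Fin n, P σ k := by
    have h1 : ∑ k ∈ Finset.range (t + 1), ∑ σ : Fin t → Fin n, P σ k
        = (∑ σ : Fin t → Fin n, ∑ k ∈ Finset.range (t + 1), F (w σ k))
          - (n:ℝ) ^ t * ((t:ℝ) + 1) * F wstar := by
      rw [Finset.sum_comm]
      have h2 : ∀ σ : Fin t → Fin n, ∑ k ∈ Finset.range (t + 1), P σ k
          = (∑ k ∈ Finset.range (t + 1), F (w σ k)) - ((t:ℝ) + 1) * F wstar := by
        intro σ
        rw [hP]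
        simp only []
        rw [Finset.sum_sub_distrib, Finset.sum_const, Finset.card_range, nsmul_eq_mul]
        push_cast
        ring
      rw [Finset.sum_congr rfl fun σ _ => h2 σ, Finset.sum_sub_distrib, Finset.sum_const,
        Finset.card_univ, Fintype.card_fun, Fintype.card_fin, Fintype.card_fin, nsmul_eq_mul]
      push_cast
      ring
    rw [h1]
    have h5 : ∑ σ : Fin t → Fin n, ((t : ℝ) + 1)⁻¹ * ∑ k ∈ Finset.range (t + 1), F (w σ k)
        = ((t:ℝ) + 1)⁻¹ * ∑ σ : Fin t → Fin n, ∑ k ∈ Finset.range (t + 1), F (w σ k) := by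
      rw [Finset.mul_sum]
    rw [h5]
    field_simp
  rw [hLHS]
  have hbound : ((n:ℝ) ^ t)⁻¹ * ((t:ℝ) + 1)⁻¹
        * ∑ k ∈ Finset.range (t + 1), ∑ σ : Fin t → Fin n, P σ k
      ≤ ((n:ℝ) ^ t)⁻¹ * ((t:ℝ) + 1)⁻¹ * ((n:ℝ) ^ t * R) := by
    apply mul_le_mul_of_nonneg_left hsumP (by positivity)
  refine le_trans hbound ?_
  have hst : (0:ℝ) < Real.sqrt ((t:ℝ) + 1) := Real.sqrt_pos.2 ht1
  have hsq : Real.sqrt ((t:ℝ) + 1) ^ 2 = (t:ℝ) + 1 := Real.sq_sqrt ht1.le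
  apply le_of_eq
  rw [hR]
  have hne : ((n:ℝ) ^ t) ≠ 0 := ne_of_gt hnt
  field_simp
  ring_nf
  have hsq2 : Real.sqrt (1 + (t:ℝ)) ^ 2 = 1 + (t:ℝ) := by
    rw [add_comm 1 ((t:ℝ))]
    exact hsq
  rw [hsq2]
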